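/- Let c : S^{N-1} → ℝ be a positive and lower semicontinuous function on the unit sphere of ℝ^N and let W_c = ⋂_{e ∈ S^{N-1}} { x ∈ ℝ^N : x·e ≤ c(e) } be its Wulff shape. If the boundary ∂W_c is a C¹ hypersurface, then for every e ∈ S^{N-1} the hyperplane { x : x·e = c(e) } is a supporting hyperplane of W_c, i.e. ∂W_c ∩ { x : x·e = c(e) } ≠ ∅. -/
import Mathlib


open scoped RealInnerProductSpace

noncomputable section

/-- The Wulff shape of a function `c` on the unit sphere of `ℝ^N`. -/
def wulff (N : ℕ) (c : EuclideanSpace ℝ (Fin N) → ℝ) : Set (EuclideanSpace ℝ (Fin N)) :=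
  ⋂ e ∈ Metric.sphere (0 : EuclideanSpace ℝ (Fin N)) 1, {x | ⟪x, e⟫ ≤ c e}

variable {N : ℕ} {c : EuclideanSpace ℝ (Fin N) → ℝ}

lemma mem_wulff_iff {x : EuclideanSpace ℝ (Fin N)} :
    x ∈ wulff N c ↔ ∀ e ∈ Metric.sphere (0 : EuclideanSpace ℝ (Fin N)) 1, ⟪x, e⟫ ≤ c e := by
  simp [wulff]

lemma wulff_convex : Convex ℝ (wulff N c) := by
  refine convex_iInter fun e => convex_iInter fun _ => ?_
  intro x hx y hy a b ha hb hab
  simp only [Set.mem_setOf_eq] at *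
  have h : ⟪a • x + b • y, e⟫ = a * ⟪x, e⟫ + b * ⟪y, e⟫ := by
    rw [inner_add_left, real_inner_smul_left, real_inner_smul_left]
  rw [h]
  calc a * ⟪x, e⟫ + b * ⟪y, e⟫ ≤ a * c e + b * c e :=
        add_le_add (mul_le_mul_of_nonneg_left hx ha) (mul_le_mul_of_nonneg_left hy hb)
    _ = c e := by rw [← add_mul, hab, one_mul]

lemma wulff_closed : IsClosed (wulff N c) := by
  refine isClosed_iInter fun e => isClosed_iInter fun _ => ?_
  exact isClosed_le (continuous_id.inner continuous_const) continuous_const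

lemma zero_mem_wulff (hpos : ∀ e ∈ Metric.sphere (0 : EuclideanSpace ℝ (Fin N)) 1, 0 < c e) :
    (0 : EuclideanSpace ℝ (Fin N)) ∈ wulff N c := by
  rw [mem_wulff_iff]
  intro e he
  simp [le_of_lt (hpos e he)]

lemma wulff_bounded (hpos : ∀ e ∈ Metric.sphere (0 : EuclideanSpace ℝ (Fin N)) 1, 0 < c e) :
    Bornology.IsBounded (wulff N c) := by
  by_contra h
  rw [isBounded_iff_forall_norm_le] at h
  push_neg at h
  choose x hxW hxn using fun n : ℕ => h n
  have hx0 : ∀ n : ℕ, x n ≠ 0 := by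
    intro n hx
    have h1 := hxn n
    rw [hx, norm_zero] at h1
    exact (Nat.cast_nonneg n).not_gt h1
  set u : ℕ → EuclideanSpace ℝ (Fin N) := fun n => ‖x n‖⁻¹ • x n with hu
  have hmemu : ∀ n, u n ∈ Metric.sphere (0 : EuclideanSpace ℝ (Fin N)) 1 := by
    intro n
    rw [mem_sphere_zero_iff_norm, norm_smul, norm_inv, norm_norm,
      inv_mul_cancel₀ (norm_ne_zero_iff.2 (hx0 n))]
  obtain ⟨p, hp, φ, hφ, hconv⟩ :=
    (isCompact_sphere (0 : EuclideanSpace ℝ (Fin N)) 1).tendsto_subseq hmemu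
  set t : ℝ := c p + 1 with ht
  have htpos : 0 < t := by have := hpos p hp; linarith
  have hmem : ∀ n : ℕ, t ≤ ‖x n‖ → t • u n ∈ wulff N c := by
    intro n hn
    have h01 : 0 ≤ t / ‖x n‖ ∧ t / ‖x n‖ ≤ 1 := by
      constructor
      · positivity
      · rw [div_le_one (lt_of_lt_of_le htpos hn)]; exact hn
    have hc := wulff_convex (zero_mem_wulff hpos) (hxW n)
      (by linarith [h01.2] : (0:ℝ) ≤ 1 - t / ‖x n‖) h01.1 (by ring)
    have heq : (t / ‖x n‖) • x n = t • u n := by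
      rw [hu]; rw [smul_smul, div_eq_mul_inv]
    rw [smul_zero, zero_add, heq] at hc
    exact hc
  have hlim : Filter.Tendsto (fun k => t • u (φ k)) Filter.atTop (nhds (t • p)) :=
    hconv.const_smul t
  have hev : ∀ᶠ k in Filter.atTop, t • u (φ k) ∈ wulff N c := by
    filter_upwards [Filter.eventually_ge_atTop (Nat.ceil t)] with k hk
    refine hmem (φ k) ?_
    have h1 : (φ k : ℝ) < ‖x (φ k)‖ := hxn (φ k)
    have h2 : (Nat.ceil t : ℕ) ≤ φ k := le_trans hk hφ.le_apply
    have h3 : (Nat.ceil t : ℝ) ≤ (φ k : ℝ) := by exact_mod_cast h2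
    have h4 := Nat.le_ceil t
    linarith
  have hmemp : t • p ∈ wulff N c := wulff_closed.mem_of_tendsto hlim hev
  have hfin := (mem_wulff_iff.1 hmemp) p hp
  rw [real_inner_smul_left, real_inner_self_eq_norm_sq,
    mem_sphere_zero_iff_norm.1 hp] at hfin
  simp only [one_pow, mul_one] at hfin
  linarith

/-- If `c` is positive and lower semicontinuous on the sphere and the boundary of its Wulff
shape `W_c` is a `C¹` hypersurface (expressed here by the uniqueness of the unit outward
normal, i.e. of the supporting direction, at every boundary point), then for every unit
direction `e` the hyperplane `{x : ⟪x,e⟫ = c e}` is a supporting hyperplane of `W_c`,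
i.e. it meets the boundary of `W_c` (the containment of `W_c` in the half-space
`{x : ⟪x,e⟫ ≤ c e}` being automatic from the definition). -/
theorem wulff_supporting_of_C1
    (N : ℕ) (hN : 1 ≤ N) (c : EuclideanSpace ℝ (Fin N) → ℝ)
    (hpos : ∀ e ∈ Metric.sphere (0 : EuclideanSpace ℝ (Fin N)) 1, 0 < c e)
    (hlsc : LowerSemicontinuousOn c (Metric.sphere (0 : EuclideanSpace ℝ (Fin N)) 1))
    (hC1 : ∀ x ∈ frontier (wulff N c),
      ∃! n : EuclideanSpace ℝ (Fin N),
        ‖n‖ = 1 ∧ ∀ y ∈ wulff N c, ⟪y, n⟫ ≤ ⟪x, n⟫) :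
    ∀ e ∈ Metric.sphere (0 : EuclideanSpace ℝ (Fin N)) 1,
      (frontier (wulff N c) ∩ {x | ⟪x, e⟫ = c e}).Nonempty := by
  intro e he
  have hWc : IsCompact (wulff N c) :=
    Metric.isCompact_of_isClosed_isBounded wulff_closed (wulff_bounded hpos)
  obtain ⟨x₀, hx₀W, hmax⟩ := hWc.exists_isMaxOn (f := fun x => ⟪x, e⟫)
    ⟨0, zero_mem_wulff hpos⟩ ((continuous_id.inner continuous_const).continuousOn)
  -- x₀ is a frontier point
  have hx₀f : x₀ ∈ frontier (wulff N c) := by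
    rw [frontier, wulff_closed.closure_eq]
    refine ⟨hx₀W, fun hint => ?_⟩
    obtain ⟨δ, hδ, hball⟩ := Metric.isOpen_iff.1 isOpen_interior x₀ hint
    have hmem : x₀ + (δ/2) • e ∈ wulff N c := by
      apply interior_subset; apply hball
      rw [Metric.mem_ball, dist_eq_norm]
      have h : x₀ + (δ/2) • e - x₀ = (δ/2) • e := by abel
      rw [h, norm_smul, mem_sphere_zero_iff_norm.1 he, mul_one,
        Real.norm_eq_abs, abs_of_pos (by linarith : (0:ℝ) < δ/2)]
      linarith
    have h := hmax hmem
    simp only [Set.mem_setOf_eq] at h  -- maybe not needed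
    rw [inner_add_left, real_inner_smul_left, real_inner_self_eq_norm_sq,
      mem_sphere_zero_iff_norm.1 he] at h
    simp only [one_pow, mul_one] at h
    have h' : ⟪x₀, e⟫ ≤ ⟪x₀, e⟫ := le_refl _
    linarith [h]
  have hx₀nint : x₀ ∉ interior (wulff N c) := by
    rw [frontier, wulff_closed.closure_eq] at hx₀f
    exact hx₀f.2
  -- active constraint at x₀
  have key : ∃ e' ∈ Metric.sphere (0 : EuclideanSpace ℝ (Fin N)) 1, ⟪x₀, e'⟫ = c e' := by
    set A : {δ : ℝ // 0 < δ} → Set (EuclideanSpace ℝ (Fin N)) := fun δ =>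
      {e' | e' ∈ Metric.sphere (0 : EuclideanSpace ℝ (Fin N)) 1 ∧ c e' - ⟪x₀, e'⟫ ≤ δ} with hA
    have hAsub : ∀ δ, A δ ⊆ Metric.sphere (0 : EuclideanSpace ℝ (Fin N)) 1 :=
      fun δ e' h => h.1
    have hAclosed : ∀ δ, IsClosed (A δ) := by
      intro δ
      rw [← isSeqClosed_iff_isClosed]
      intro v p hv hvp
      have hps : p ∈ Metric.sphere (0 : EuclideanSpace ℝ (Fin N)) 1 :=
        (Metric.isClosed_sphere).mem_of_tendsto hvp
          (Filter.Eventually.of_forall fun k => (hv k).1)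
      refine ⟨hps, ?_⟩
      by_contra hcon
      push_neg at hcon
      set ε : ℝ := (c p - ⟪x₀, p⟫ - δ) / 2 with hε
      have hεpos : 0 < ε := by rw [hε]; linarith
      have hy : c p - ε < c p := by linarith
      have hlsc' := hlsc p hps (c p - ε) hy
      have hvin : Filter.Tendsto v Filter.atTop
          (nhdsWithin p (Metric.sphere (0 : EuclideanSpace ℝ (Fin N)) 1)) := by
        rw [tendsto_nhdsWithin_iff]
        exact ⟨hvp, Filter.Eventually.of_forall fun k => (hv k).1⟩
      have hev1 : ∀ᶠ k in Filter.atTop, c p - ε < c (v k) := hvin.eventually hlsc'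
      have hinner : Filter.Tendsto (fun k => ⟪x₀, v k⟫) Filter.atTop (nhds ⟪x₀, p⟫) :=
        ((continuous_const.inner continuous_id).tendsto p).comp hvp
      have hev2 : ∀ᶠ k in Filter.atTop, ⟪x₀, v k⟫ < ⟪x₀, p⟫ + ε :=
        hinner.eventually_lt_const (by linarith)
      obtain ⟨k, hk1, hk2⟩ := (hev1.and hev2).exists
      have := (hv k).2
      simp only [hε] at hk1 hk2 this
      linarith
    have hAne : ∀ δ, (A δ).Nonempty := by
      intro δ
      by_contra hconA
      rw [Set.not_nonempty_iff_eq_empty] at hconA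
      apply hx₀nint
      rw [mem_interior_iff_mem_nhds]
      refine Filter.mem_of_superset (Metric.ball_mem_nhds x₀ δ.2) ?_
      intro y hy
      rw [mem_wulff_iff]
      intro e' he'
      have hne : e' ∉ A δ := by rw [hconA]; exact Set.notMem_empty _
      have hgap : (δ : ℝ) < c e' - ⟪x₀, e'⟫ := by
        by_contra hle
        exact hne ⟨he', by push_neg at hle; linarith⟩
      have hdiff : ⟪y, e'⟫ - ⟪x₀, e'⟫ ≤ ‖y - x₀‖ := by
        have h1 : ⟪y - x₀, e'⟫ ≤ ‖y - x₀‖ * ‖e'‖ := real_inner_le_norm _ _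
        rw [inner_sub_left, mem_sphere_zero_iff_norm.1 he', mul_one] at h1
        exact h1
      have hnorm : ‖y - x₀‖ < δ := by rw [← dist_eq_norm]; exact hy
      linarith
    have hAcpt : ∀ δ, IsCompact (A δ) := fun δ =>
      (isCompact_sphere (0 : EuclideanSpace ℝ (Fin N)) 1).of_isClosed_subset
        (hAclosed δ) (hAsub δ)
    have hdir : Directed (· ⊇ ·) A := by
      intro δ₁ δ₂
      refine ⟨⟨min δ₁ δ₂, lt_min δ₁.2 δ₂.2⟩, ?_, ?_⟩
      · intro x hx
        exact ⟨hx.1, le_trans hx.2 (by exact_mod_cast min_le_left (δ₁:ℝ) δ₂)⟩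
      · intro x hx
        exact ⟨hx.1, le_trans hx.2 (by exact_mod_cast min_le_right (δ₁:ℝ) δ₂)⟩
    have : Nonempty {δ : ℝ // 0 < δ} := ⟨⟨1, one_pos⟩⟩
    obtain ⟨e', he'⟩ := IsCompact.nonempty_iInter_of_directed_nonempty_isCompact_isClosed
      A hdir hAne hAcpt hAclosed
    rw [Set.mem_iInter] at he'
    have hes : e' ∈ Metric.sphere (0 : EuclideanSpace ℝ (Fin N)) 1 := (he' ⟨1, one_pos⟩).1
    refine ⟨e', hes, le_antisymm (mem_wulff_iff.1 hx₀W e' hes) ?_⟩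
    by_contra hlt
    push_neg at hlt
    have hδ : (0:ℝ) < (c e' - ⟪x₀, e'⟫) / 2 := by linarith
    have := (he' ⟨_, hδ⟩).2
    simp only at this
    linarith
  obtain ⟨e'', he''s, he''⟩ := key
  obtain ⟨n, _, huniq⟩ := hC1 x₀ hx₀f
  have h1 : e = n := huniq e ⟨mem_sphere_zero_iff_norm.1 he, fun y hy => hmax hy⟩
  have h2 : e'' = n := huniq e'' ⟨mem_sphere_zero_iff_norm.1 he''s, fun y hy => by
    rw [he'']; exact mem_wulff_iff.1 hy e'' he''s⟩
  have hee : e'' = e := h2.trans h1.symm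
  exact ⟨x₀, hx₀f, by rw [Set.mem_setOf_eq, ← hee, he'']⟩
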